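/- arXiv:2307.16630 — 10 statements merged into one kernel-verified Lean document; each statement's English description precedes it below -/
import Mathlib

section
/- Let Y be a set of labels with at least two elements, let n be a positive integer, let ε > 0, and let h : ℤⁿ → Y be any function. Let a > 0 be the normalizing constant with a · ∑_{z ∈ ℤⁿ} exp(−ε‖z‖₁) = 1, and for τ ∈ ℤⁿ let P_τ be the probability mass function on ℤⁿ given by P_τ(z) = a · exp(−ε‖z − τ‖₁). Suppose y_A ∈ Y and real numbers p_A, p_B with 0 < p_B ≤ p_A ≤ 1 satisfy: ∑_{z ∈ ℤⁿ} P_τ(z)·1[h(z) = y_A] ≥ p_A, and for every y ≠ y_A, ∑_{z ∈ ℤⁿ} P_τ(z)·1[h(z) = y] ≤ p_B. Then for every δ ∈ ℤⁿ with ‖δ‖₁ ≤ max{ (1/(2ε))·ln(p_A/p_B), −(1/ε)·ln(1 − p_A + p_B) } and every y ≠ y_A, it holds that ∑_{z ∈ ℤⁿ} P_{τ+δ}(z)·1[h(z) = y_A] ≥ ∑_{z ∈ ℤⁿ} P_{τ+δ}(z)·1[h(z) = y]. -/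
open scoped BigOperators

/-- Theorem 1 of the paper: certified robustness of the staircase-smoothed classifier
against synonym substitution, for the lattice-supported staircase (discrete Laplace)
noise `P_τ(z) = a · exp(−ε‖z − τ‖₁)` on `ℤⁿ`. -/
theorem staircase_certified_robustness
    {Y : Type*} [Nontrivial Y] [DecidableEq Y]
    (n : ℕ) (hn : 0 < n) (ε : ℝ) (hε : 0 < ε)
    (h : (Fin n → ℤ) → Y) (a : ℝ) (ha : 0 < a)
    (hnorm : a * ∑' z : Fin n → ℤ, Real.exp (-ε * ∑ i, |(z i : ℝ)|) = 1)
    (τ : Fin n → ℤ) (yA : Y) (pA pB : ℝ)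
    (hpB : 0 < pB) (hBA : pB ≤ pA) (hpA : pA ≤ 1)
    (hA : pA ≤ ∑' z : Fin n → ℤ,
      (a * Real.exp (-ε * ∑ i, |((z i - τ i : ℤ) : ℝ)|)) * (if h z = yA then 1 else 0))
    (hB : ∀ y : Y, y ≠ yA → ∑' z : Fin n → ℤ,
      (a * Real.exp (-ε * ∑ i, |((z i - τ i : ℤ) : ℝ)|)) * (if h z = y then 1 else 0) ≤ pB)
    (δ : Fin n → ℤ)
    (hδ : (∑ i, |(δ i : ℝ)|) ≤
      max ((1 / (2 * ε)) * Real.log (pA / pB)) (-(1 / ε) * Real.log (1 - pA + pB)))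
    (y : Y) (hy : y ≠ yA) :
    ∑' z : Fin n → ℤ,
        (a * Real.exp (-ε * ∑ i, |((z i - (τ i + δ i) : ℤ) : ℝ)|)) * (if h z = y then 1 else 0)
      ≤ ∑' z : Fin n → ℤ,
        (a * Real.exp (-ε * ∑ i, |((z i - (τ i + δ i) : ℤ) : ℝ)|)) *
          (if h z = yA then 1 else 0) := by
  classical
  set D : ℝ := ∑ i, |(δ i : ℝ)| with hD
  have hD0 : 0 ≤ D := Finset.sum_nonneg fun i _ => abs_nonneg _
  set E : ℝ := Real.exp (ε * D) with hE
  have hE0 : 0 < E := Real.exp_pos _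
  -- base summability
  have hbase : Summable (fun z : Fin n → ℤ => Real.exp (-ε * ∑ i, |(z i : ℝ)|)) := by
    by_contra hns
    rw [tsum_eq_zero_of_not_summable hns, mul_zero] at hnorm
    exact one_ne_zero hnorm.symm
  -- translated family: summable with total mass 1
  have key : ∀ c : Fin n → ℤ,
      Summable (fun z : Fin n → ℤ => a * Real.exp (-ε * ∑ i, |((z i - c i : ℤ) : ℝ)|)) ∧
      (∑' z : Fin n → ℤ, a * Real.exp (-ε * ∑ i, |((z i - c i : ℤ) : ℝ)|)) = 1 := by
    intro c
    have heq : ((fun z : Fin n → ℤ => a * Real.exp (-ε * ∑ i, |((z i - c i : ℤ) : ℝ)|)) ∘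
        (Equiv.addRight c)) = fun z : Fin n → ℤ => a * Real.exp (-ε * ∑ i, |(z i : ℝ)|) := by
      funext z
      simp [Function.comp, Equiv.coe_addRight, Pi.add_apply, add_sub_cancel_right]
    have hcs : Summable ((fun z : Fin n → ℤ =>
        a * Real.exp (-ε * ∑ i, |((z i - c i : ℤ) : ℝ)|)) ∘ (Equiv.addRight c)) := by
      rw [heq]; exact hbase.mul_left a
    refine ⟨(Equiv.addRight c).summable_iff.mp hcs, ?_⟩
    rw [← (Equiv.addRight c).tsum_eq
      (fun z : Fin n → ℤ => a * Real.exp (-ε * ∑ i, |((z i - c i : ℤ) : ℝ)|))]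
    have : (∑' z : Fin n → ℤ, ((fun z : Fin n → ℤ =>
        a * Real.exp (-ε * ∑ i, |((z i - c i : ℤ) : ℝ)|)) ∘ (Equiv.addRight c)) z) = 1 := by
      rw [heq, tsum_mul_left]; exact hnorm
    simpa [Function.comp] using this
  have keyτ := key τ
  have keyc : Summable (fun z : Fin n → ℤ =>
        a * Real.exp (-ε * ∑ i, |((z i - (τ i + δ i) : ℤ) : ℝ)|)) ∧
      (∑' z : Fin n → ℤ, a * Real.exp (-ε * ∑ i, |((z i - (τ i + δ i) : ℤ) : ℝ)|)) = 1 :=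
    key (fun i => τ i + δ i)
  -- indicator bounds
  have hI01 : ∀ (y' : Y) (z : Fin n → ℤ),
      0 ≤ (if h z = y' then (1:ℝ) else 0) ∧ (if h z = y' then (1:ℝ) else 0) ≤ 1 := by
    intro y' z; constructor <;> split <;> norm_num
  -- summability with indicators
  have hsumIτ : ∀ y' : Y, Summable (fun z : Fin n → ℤ =>
      (a * Real.exp (-ε * ∑ i, |((z i - τ i : ℤ) : ℝ)|)) * (if h z = y' then (1:ℝ) else 0)) := by
    intro y'
    refine Summable.of_nonneg_of_le
      (fun z => mul_nonneg (by positivity) (hI01 y' z).1)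
      (fun z => mul_le_of_le_one_right (by positivity) (hI01 y' z).2) keyτ.1
  have hsumIc : ∀ y' : Y, Summable (fun z : Fin n → ℤ =>
      (a * Real.exp (-ε * ∑ i, |((z i - (τ i + δ i) : ℤ) : ℝ)|)) *
        (if h z = y' then (1:ℝ) else 0)) := by
    intro y'
    refine Summable.of_nonneg_of_le
      (fun z => mul_nonneg (by positivity) (hI01 y' z).1)
      (fun z => mul_le_of_le_one_right (by positivity) (hI01 y' z).2) keyc.1
  -- generic exponential comparison
  have hexp : ∀ S S' : ℝ, S - S' ≤ D →
      a * Real.exp (-ε * S') ≤ E * (a * Real.exp (-ε * S)) := by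
    intro S S' hSS
    have h1 : E * (a * Real.exp (-ε * S)) = a * Real.exp (ε * D + -ε * S) := by
      rw [Real.exp_add, hE]; ring
    rw [h1]
    refine mul_le_mul_of_nonneg_left (Real.exp_le_exp.mpr ?_) ha.le
    nlinarith [mul_le_mul_of_nonneg_left hSS hε.le]
  -- ℓ¹ triangle inequalities
  have hd1 : ∀ z : Fin n → ℤ,
      (∑ i, |((z i - τ i : ℤ) : ℝ)|) - (∑ i, |((z i - (τ i + δ i) : ℤ) : ℝ)|) ≤ D := by
    intro z
    rw [hD, ← Finset.sum_sub_distrib]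
    refine Finset.sum_le_sum fun i _ => ?_
    have h2 : ((z i - (τ i + δ i) : ℤ) : ℝ) = ((z i - τ i : ℤ) : ℝ) - ((δ i : ℤ) : ℝ) := by
      push_cast; ring
    rw [h2]
    have h3 := abs_sub_abs_le_abs_sub ((z i - τ i : ℤ) : ℝ)
      (((z i - τ i : ℤ) : ℝ) - ((δ i : ℤ) : ℝ))
    simpa using h3
  have hd2 : ∀ z : Fin n → ℤ,
      (∑ i, |((z i - (τ i + δ i) : ℤ) : ℝ)|) - (∑ i, |((z i - τ i : ℤ) : ℝ)|) ≤ D := by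
    intro z
    rw [hD, ← Finset.sum_sub_distrib]
    refine Finset.sum_le_sum fun i _ => ?_
    have h2 : ((z i - (τ i + δ i) : ℤ) : ℝ) = ((z i - τ i : ℤ) : ℝ) - ((δ i : ℤ) : ℝ) := by
      push_cast; ring
    rw [h2]
    have h3 := abs_sub_abs_le_abs_sub (((z i - τ i : ℤ) : ℝ) - ((δ i : ℤ) : ℝ))
      ((z i - τ i : ℤ) : ℝ)
    simpa using h3
  have hpt1 : ∀ z : Fin n → ℤ,
      a * Real.exp (-ε * ∑ i, |((z i - (τ i + δ i) : ℤ) : ℝ)|) ≤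
      E * (a * Real.exp (-ε * ∑ i, |((z i - τ i : ℤ) : ℝ)|)) :=
    fun z => hexp _ _ (hd1 z)
  have hpt2 : ∀ z : Fin n → ℤ,
      a * Real.exp (-ε * ∑ i, |((z i - τ i : ℤ) : ℝ)|) ≤
      E * (a * Real.exp (-ε * ∑ i, |((z i - (τ i + δ i) : ℤ) : ℝ)|)) :=
    fun z => hexp _ _ (hd2 z)
  -- (1)  Ty ≤ E * Sy
  have h1 : (∑' z : Fin n → ℤ,
        (a * Real.exp (-ε * ∑ i, |((z i - (τ i + δ i) : ℤ) : ℝ)|)) * (if h z = y then 1 else 0))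
      ≤ E * ∑' z : Fin n → ℤ,
        (a * Real.exp (-ε * ∑ i, |((z i - τ i : ℤ) : ℝ)|)) * (if h z = y then 1 else 0) := by
    rw [← tsum_mul_left]
    refine Summable.tsum_le_tsum (fun z => ?_) (hsumIc y) ((hsumIτ y).mul_left E)
    have := mul_le_mul_of_nonneg_right (hpt1 z) (hI01 y z).1
    exact this.trans_eq (by ring)
  -- (2)  SA ≤ E * TA
  have h2 : (∑' z : Fin n → ℤ,
        (a * Real.exp (-ε * ∑ i, |((z i - τ i : ℤ) : ℝ)|)) * (if h z = yA then 1 else 0))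
      ≤ E * ∑' z : Fin n → ℤ,
        (a * Real.exp (-ε * ∑ i, |((z i - (τ i + δ i) : ℤ) : ℝ)|)) *
          (if h z = yA then 1 else 0) := by
    rw [← tsum_mul_left]
    refine Summable.tsum_le_tsum (fun z => ?_) (hsumIτ yA) ((hsumIc yA).mul_left E)
    have := mul_le_mul_of_nonneg_right (hpt2 z) (hI01 yA z).1
    exact this.trans_eq (by ring)
  -- (3)  1 - TA ≤ E * (1 - SA)
  have h3 : 1 - (∑' z : Fin n → ℤ,
        (a * Real.exp (-ε * ∑ i, |((z i - (τ i + δ i) : ℤ) : ℝ)|)) *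
          (if h z = yA then 1 else 0))
      ≤ E * (1 - ∑' z : Fin n → ℤ,
        (a * Real.exp (-ε * ∑ i, |((z i - τ i : ℤ) : ℝ)|)) * (if h z = yA then 1 else 0)) := by
    have hsubc : (∑' z : Fin n → ℤ,
        ((a * Real.exp (-ε * ∑ i, |((z i - (τ i + δ i) : ℤ) : ℝ)|)) -
          (a * Real.exp (-ε * ∑ i, |((z i - (τ i + δ i) : ℤ) : ℝ)|)) *
            (if h z = yA then 1 else 0)))
        = 1 - (∑' z : Fin n → ℤ,
        (a * Real.exp (-ε * ∑ i, |((z i - (τ i + δ i) : ℤ) : ℝ)|)) *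
          (if h z = yA then 1 else 0)) := by
      rw [Summable.tsum_sub keyc.1 (hsumIc yA), keyc.2]
    have hsubτ : (∑' z : Fin n → ℤ,
        E * ((a * Real.exp (-ε * ∑ i, |((z i - τ i : ℤ) : ℝ)|)) -
          (a * Real.exp (-ε * ∑ i, |((z i - τ i : ℤ) : ℝ)|)) * (if h z = yA then 1 else 0)))
        = E * (1 - ∑' z : Fin n → ℤ,
        (a * Real.exp (-ε * ∑ i, |((z i - τ i : ℤ) : ℝ)|)) * (if h z = yA then 1 else 0)) := by
      rw [tsum_mul_left, Summable.tsum_sub keyτ.1 (hsumIτ yA), keyτ.2]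
    rw [← hsubc, ← hsubτ]
    refine Summable.tsum_le_tsum (fun z => ?_) (keyc.1.sub (hsumIc yA))
      ((keyτ.1.sub (hsumIτ yA)).mul_left E)
    have hub := mul_le_mul_of_nonneg_right (hpt1 z)
      (by linarith [(hI01 yA z).2] : 0 ≤ 1 - (if h z = yA then (1:ℝ) else 0))
    nlinarith [hub]
  -- case split
  rcases le_max_iff.mp hδ with hcase | hcase
  · -- ℓ¹-norm bound from the first branch of the max
    have hq : 0 < pA / pB := div_pos (lt_of_lt_of_le hpB hBA) hpB
    have h2εD : ε * D + ε * D ≤ Real.log (pA / pB) := by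
      have ha2 : (2 : ℝ) * ε * D ≤ 2 * ε * ((1 / (2 * ε)) * Real.log (pA / pB)) :=
        mul_le_mul_of_nonneg_left hcase (by positivity)
      have hb2 : (2 : ℝ) * ε * ((1 / (2 * ε)) * Real.log (pA / pB)) = Real.log (pA / pB) := by
        field_simp
      rw [hb2] at ha2; linarith
    have hEE : E * E * pB ≤ pA := by
      have hEeq : E * E = Real.exp (ε * D + ε * D) := by rw [Real.exp_add, hE]
      have hle : Real.exp (ε * D + ε * D) ≤ pA / pB := by
        rw [← Real.exp_log hq]
        exact Real.exp_le_exp.mpr h2εD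
      rw [← hEeq] at hle
      exact (le_div_iff₀ hpB).mp hle
    have hEpB : E * pB ≤ ∑' z : Fin n → ℤ,
        (a * Real.exp (-ε * ∑ i, |((z i - (τ i + δ i) : ℤ) : ℝ)|)) *
          (if h z = yA then 1 else 0) := by
      have hchain : E * (E * pB) ≤ E * (∑' z : Fin n → ℤ,
          (a * Real.exp (-ε * ∑ i, |((z i - (τ i + δ i) : ℤ) : ℝ)|)) *
            (if h z = yA then 1 else 0)) := by
        nlinarith [hEE, hA, h2]
      exact le_of_mul_le_mul_left hchain hE0
    have hSy := hB y hy
    linarith [h1, hEpB, mul_le_mul_of_nonneg_left hSy hE0.le]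
  · -- second branch of the max
    have hq2 : (0:ℝ) < 1 - pA + pB := by linarith
    have hεD : ε * D ≤ -Real.log (1 - pA + pB) := by
      have ha2 : ε * D ≤ ε * (-(1 / ε) * Real.log (1 - pA + pB)) :=
        mul_le_mul_of_nonneg_left hcase hε.le
      have hb2 : ε * (-(1 / ε) * Real.log (1 - pA + pB)) = -Real.log (1 - pA + pB) := by
        field_simp
      rw [hb2] at ha2; exact ha2
    have hEq : E * (1 - pA + pB) ≤ 1 := by
      have hle : (1 - pA + pB) ≤ Real.exp (-(ε * D)) := by
        rw [← Real.exp_log hq2]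
        exact Real.exp_le_exp.mpr (by linarith)
      have h4 : E * Real.exp (-(ε * D)) = 1 := by
        rw [hE, ← Real.exp_add]; simp
      nlinarith [mul_le_mul_of_nonneg_left hle hE0.le]
    have hSy := hB y hy
    linarith [h1, h3, hEq, mul_le_mul_of_nonneg_left hSy hE0.le,
      mul_le_mul_of_nonneg_left (by linarith [hA] : (1 - ∑' z : Fin n → ℤ,
        (a * Real.exp (-ε * ∑ i, |((z i - τ i : ℤ) : ℝ)|)) * (if h z = yA then 1 else 0)) ≤ 1 - pA) hE0.le]
end

section
/- Let n be a positive integer, ε > 0, δ ∈ ℤⁿ, and let a > 0 be the normalizing constant with a · ∑_{z ∈ ℤⁿ} exp(−ε‖z‖₁) = 1. Let W be the probability mass function on ℤⁿ given by W(z) = a · exp(−ε‖z‖₁) and V the probability mass function V(z) = a · exp(−ε‖z − δ‖₁). Let h : ℤⁿ → {0,1} be any function and β ≥ 0. (1) If Q = {z ∈ ℤⁿ : ‖z‖₁ − ‖z − δ‖₁ ≤ β} and ∑_{z} W(z)·1[h(z) = 1] ≥ ∑_{z ∈ Q} W(z), then ∑_{z} V(z)·1[h(z) = 1] ≥ ∑_{z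 ∈ Q} V(z). (2) If Q = {z ∈ ℤⁿ : ‖z‖₁ − ‖z − δ‖₁ ≥ β} and ∑_{z} W(z)·1[h(z) = 1] ≤ ∑_{z ∈ Q} W(z), then ∑_{z} V(z)·1[h(z) = 1] ≤ ∑_{z ∈ Q} V(z). -/
open scoped BigOperators

lemma np_aux1 {α : Type*} (W V : α → ℝ) (c : ℝ) (hc : 0 < c)
    (hWs : Summable W) (hVs : Summable V)
    (Q : Set α) (h : α → Bool)
    (hQle : ∀ z ∈ Q, V z ≤ c * W z)
    (hQge : ∀ z ∉ Q, c * W z ≤ V z)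
    (hW0 : ∀ z, 0 ≤ W z) (hV0 : ∀ z, 0 ≤ V z)
    (hyp : ∑' z, Q.indicator W z ≤ ∑' z, W z * (if h z then 1 else 0)) :
    ∑' z, Q.indicator V z ≤ ∑' z, V z * (if h z then 1 else 0) := by
  classical
  have hWh : Summable (fun z => W z * (if h z then 1 else 0)) :=
    hWs.of_nonneg_of_le (fun z => mul_nonneg (hW0 z) (by split <;> norm_num))
      (fun z => by split <;> simp [hW0 z])
  have hVh : Summable (fun z => V z * (if h z then 1 else 0)) :=
    hVs.of_nonneg_of_le (fun z => mul_nonneg (hV0 z) (by split <;> norm_num))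
      (fun z => by split <;> simp [hV0 z])
  have hWi : Summable (Q.indicator W) := hWs.indicator Q
  have hVi : Summable (Q.indicator V) := hVs.indicator Q
  have key : ∀ z, c * (W z * (if h z then 1 else 0) - Q.indicator W z)
      ≤ V z * (if h z then 1 else 0) - Q.indicator V z := by
    intro z
    by_cases hz : z ∈ Q
    · rw [Set.indicator_of_mem hz, Set.indicator_of_mem hz]
      have := hQle z hz
      split <;> nlinarith [hW0 z, hV0 z]
    · rw [Set.indicator_of_notMem hz, Set.indicator_of_notMem hz]
      have := hQge z hz
      split <;> nlinarith [hW0 z, hV0 z]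
  have h1 : ∑' z, c * (W z * (if h z then 1 else 0) - Q.indicator W z)
      ≤ ∑' z, (V z * (if h z then 1 else 0) - Q.indicator V z) :=
    Summable.tsum_le_tsum key ((hWh.sub hWi).mul_left c) (hVh.sub hVi)
  rw [tsum_mul_left, Summable.tsum_sub hWh hWi, Summable.tsum_sub hVh hVi] at h1
  nlinarith

lemma np_aux2 {α : Type*} (W V : α → ℝ) (c : ℝ) (hc : 0 < c)
    (hWs : Summable W) (hVs : Summable V)
    (Q : Set α) (h : α → Bool)
    (hQge : ∀ z ∈ Q, c * W z ≤ V z)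
    (hQle : ∀ z ∉ Q, V z ≤ c * W z)
    (hW0 : ∀ z, 0 ≤ W z) (hV0 : ∀ z, 0 ≤ V z)
    (hyp : ∑' z, W z * (if h z then 1 else 0) ≤ ∑' z, Q.indicator W z) :
    ∑' z, V z * (if h z then 1 else 0) ≤ ∑' z, Q.indicator V z := by
  classical
  have hWh : Summable (fun z => W z * (if h z then 1 else 0)) :=
    hWs.of_nonneg_of_le (fun z => mul_nonneg (hW0 z) (by split <;> norm_num))
      (fun z => by split <;> simp [hW0 z])
  have hVh : Summable (fun z => V z * (if h z then 1 else 0)) :=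
    hVs.of_nonneg_of_le (fun z => mul_nonneg (hV0 z) (by split <;> norm_num))
      (fun z => by split <;> simp [hV0 z])
  have hWi : Summable (Q.indicator W) := hWs.indicator Q
  have hVi : Summable (Q.indicator V) := hVs.indicator Q
  have key : ∀ z, V z * (if h z then 1 else 0) - Q.indicator V z
      ≤ c * (W z * (if h z then 1 else 0) - Q.indicator W z) := by
    intro z
    by_cases hz : z ∈ Q
    · rw [Set.indicator_of_mem hz, Set.indicator_of_mem hz]
      have := hQge z hz
      split <;> nlinarith [hW0 z, hV0 z]
    · rw [Set.indicator_of_notMem hz, Set.indicator_of_notMem hz]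
      have := hQle z hz
      split <;> nlinarith [hW0 z, hV0 z]
  have h1 : ∑' z, (V z * (if h z then 1 else 0) - Q.indicator V z)
      ≤ ∑' z, c * (W z * (if h z then 1 else 0) - Q.indicator W z) :=
    Summable.tsum_le_tsum key (hVh.sub hVi) ((hWh.sub hWi).mul_left c)
  rw [tsum_mul_left, Summable.tsum_sub hWh hWi, Summable.tsum_sub hVh hVi] at h1
  nlinarith

set_option maxHeartbeats 1000000 in
/-- Lemma 1 of the paper: Neyman–Pearson for the staircase (discrete Laplace) mechanism
under different means, for deterministic binary classifiers on the lattice `ℤⁿ`.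
Here `W(z) = a·exp(−ε‖z‖₁)` and `V(z) = a·exp(−ε‖z−δ‖₁)`. -/
theorem neyman_pearson_staircase
    (n : ℕ) (hn : 0 < n) (ε : ℝ) (hε : 0 < ε) (δ : Fin n → ℤ)
    (a : ℝ) (ha : 0 < a)
    (hnorm : a * ∑' z : Fin n → ℤ, Real.exp (-ε * ∑ i, |(z i : ℝ)|) = 1)
    (h : (Fin n → ℤ) → Bool) (β : ℝ) (hβ : 0 ≤ β)
    (Q : Set (Fin n → ℤ)) :
    ((Q = {z | (∑ i, |(z i : ℝ)|) - (∑ i, |((z i - δ i : ℤ) : ℝ)|) ≤ β} →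
        (∑' z : Fin n → ℤ,
            Q.indicator (fun z => a * Real.exp (-ε * ∑ i, |(z i : ℝ)|)) z)
          ≤ ∑' z : Fin n → ℤ,
            (a * Real.exp (-ε * ∑ i, |(z i : ℝ)|)) * (if h z then 1 else 0) →
        (∑' z : Fin n → ℤ,
            Q.indicator (fun z => a * Real.exp (-ε * ∑ i, |((z i - δ i : ℤ) : ℝ)|)) z)
          ≤ ∑' z : Fin n → ℤ,
            (a * Real.exp (-ε * ∑ i, |((z i - δ i : ℤ) : ℝ)|)) * (if h z then 1 else 0))
      ∧
     (Q = {z | β ≤ (∑ i, |(z i : ℝ)|) - (∑ i, |((z i - δ i : ℤ) : ℝ)|)} →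
        (∑' z : Fin n → ℤ,
            (a * Real.exp (-ε * ∑ i, |(z i : ℝ)|)) * (if h z then 1 else 0))
          ≤ ∑' z : Fin n → ℤ,
            Q.indicator (fun z => a * Real.exp (-ε * ∑ i, |(z i : ℝ)|)) z →
        (∑' z : Fin n → ℤ,
            (a * Real.exp (-ε * ∑ i, |((z i - δ i : ℤ) : ℝ)|)) * (if h z then 1 else 0))
          ≤ ∑' z : Fin n → ℤ,
            Q.indicator (fun z => a * Real.exp (-ε * ∑ i, |((z i - δ i : ℤ) : ℝ)|)) z)) := by
  have hWsum : Summable (fun z : Fin n → ℤ => Real.exp (-ε * ∑ i, |(z i : ℝ)|)) := by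
    by_contra hns
    rw [tsum_eq_zero_of_not_summable hns, mul_zero] at hnorm
    exact one_ne_zero hnorm.symm
  have hinj : Function.Injective (fun z : Fin n → ℤ => z - δ) := fun x y hxy => by
    simpa using congrArg (· + δ) hxy
  have hVsum : Summable (fun z : Fin n → ℤ =>
      Real.exp (-ε * ∑ i, |((z i - δ i : ℤ) : ℝ)|)) := by
    have := hWsum.comp_injective hinj
    simpa [Function.comp_def, Pi.sub_apply, Int.cast_sub] using this
  have hWs : Summable (fun z : Fin n → ℤ => a * Real.exp (-ε * ∑ i, |(z i : ℝ)|)) :=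
    hWsum.mul_left a
  have hVs : Summable (fun z : Fin n → ℤ =>
      a * Real.exp (-ε * ∑ i, |((z i - δ i : ℤ) : ℝ)|)) := hVsum.mul_left a
  have hW0 : ∀ z : Fin n → ℤ, 0 ≤ a * Real.exp (-ε * ∑ i, |(z i : ℝ)|) :=
    fun z => by positivity
  have hV0 : ∀ z : Fin n → ℤ, 0 ≤ a * Real.exp (-ε * ∑ i, |((z i - δ i : ℤ) : ℝ)|) :=
    fun z => by positivity
  set c := Real.exp (ε * β) with hcdef
  have hc : 0 < c := Real.exp_pos _
  have hratio : ∀ z : Fin n → ℤ,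
      c * (a * Real.exp (-ε * ∑ i, |(z i : ℝ)|))
        = a * Real.exp (ε * β + -ε * ∑ i, |(z i : ℝ)|) := by
    intro z
    rw [Real.exp_add]; ring
  constructor
  · intro hQ hyp
    refine np_aux1 _ _ c hc hWs hVs Q h ?_ ?_ hW0 hV0 hyp
    · intro z hz
      rw [hQ] at hz
      simp only [Set.mem_setOf_eq] at hz
      rw [hratio z]
      have hexp : Real.exp (-ε * ∑ i, |((z i - δ i : ℤ) : ℝ)|)
          ≤ Real.exp (ε * β + -ε * ∑ i, |(z i : ℝ)|) := by
        apply Real.exp_le_exp.2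
        nlinarith
      nlinarith
    · intro z hz
      rw [hQ] at hz
      simp only [Set.mem_setOf_eq, not_le] at hz
      rw [hratio z]
      have hexp : Real.exp (ε * β + -ε * ∑ i, |(z i : ℝ)|)
          ≤ Real.exp (-ε * ∑ i, |((z i - δ i : ℤ) : ℝ)|) := by
        apply Real.exp_le_exp.2
        nlinarith
      nlinarith
  · intro hQ hyp
    refine np_aux2 _ _ c hc hWs hVs Q h ?_ ?_ hW0 hV0 hyp
    · intro z hz
      rw [hQ] at hz
      simp only [Set.mem_setOf_eq] at hz
      rw [hratio z]
      have hexp : Real.exp (ε * β + -ε * ∑ i, |(z i : ℝ)|)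
          ≤ Real.exp (-ε * ∑ i, |((z i - δ i : ℤ) : ℝ)|) := by
        apply Real.exp_le_exp.2
        nlinarith
      nlinarith
    · intro z hz
      rw [hQ] at hz
      simp only [Set.mem_setOf_eq, not_le] at hz
      rw [hratio z]
      have hexp : Real.exp (-ε * ∑ i, |((z i - δ i : ℤ) : ℝ)|)
          ≤ Real.exp (ε * β + -ε * ∑ i, |(z i : ℝ)|) := by
        apply Real.exp_le_exp.2
        nlinarith
      nlinarith
end

section
/- Let n be a positive integer, ε > 0, δ ∈ ℤⁿ, and let a > 0 satisfy a · ∑_{z ∈ ℤⁿ} exp(−ε‖z‖₁) = 1. Let A ⊆ ℤⁿ and set p_A = a · ∑_{z ∈ A} exp(−ε‖z‖₁). Then a · ∑_{z ∈ A} exp(−ε‖z−δ‖₁) ≥ 1 − exp(ε‖δ‖₁) · (1 − p_A). -/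
open scoped BigOperators

/-- Claim 2 in the proof of the paper's Theorem 1: the staircase (discrete Laplace)
distribution on `ℤⁿ` shifted by `δ` assigns to any set `A` of original mass
`p_A = a·∑_{z∈A} exp(−ε‖z‖₁)` a mass at least `1 − exp(ε‖δ‖₁)(1 − p_A)`. -/
theorem staircase_shift_lower_bound
    (n : ℕ) (hn : 0 < n) (ε : ℝ) (hε : 0 < ε) (δ : Fin n → ℤ)
    (a : ℝ) (ha : 0 < a)
    (hnorm : a * ∑' z : Fin n → ℤ, Real.exp (-ε * ∑ i, |(z i : ℝ)|) = 1)
    (A : Set (Fin n → ℤ)) :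
    1 - Real.exp (ε * ∑ i, |(δ i : ℝ)|) *
        (1 - a * ∑' z : A, Real.exp (-ε * ∑ i, |((z : Fin n → ℤ) i : ℝ)|))
      ≤ a * ∑' z : A, Real.exp (-ε * ∑ i, |(((z : Fin n → ℤ) i - δ i : ℤ) : ℝ)|) := by
  set f : (Fin n → ℤ) → ℝ := fun z => Real.exp (-ε * ∑ i, |(z i : ℝ)|) with hf
  set g : (Fin n → ℤ) → ℝ := fun z => Real.exp (-ε * ∑ i, |((z i - δ i : ℤ) : ℝ)|) with hg
  set C : ℝ := Real.exp (ε * ∑ i, |(δ i : ℝ)|) with hCdef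
  have hCpos : 0 < C := Real.exp_pos _
  have hsum : Summable f := by
    by_contra h
    rw [tsum_eq_zero_of_not_summable h, mul_zero] at hnorm
    norm_num at hnorm
  have hgeq : g = fun z => f (z - δ) := by
    funext z
    simp only [hf, hg, Pi.sub_apply]
  have hgsum : Summable g := by
    rw [hgeq]
    exact (Equiv.subRight δ).summable_iff.mpr hsum
  have htg : ∑' z, g z = ∑' z, f z := by
    rw [hgeq]
    exact (Equiv.subRight δ).tsum_eq f
  have hC : ∀ z, g z ≤ C * f z := by
    intro z
    rw [hCdef, hf, hg, ← Real.exp_add]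
    apply Real.exp_le_exp.mpr
    have h1 : ∑ i, |(z i : ℝ)| ≤ ∑ i, |((z i - δ i : ℤ) : ℝ)| + ∑ i, |(δ i : ℝ)| := by
      rw [← Finset.sum_add_distrib]
      apply Finset.sum_le_sum
      intro i _
      push_cast
      calc |(z i : ℝ)| = |((z i : ℝ) - δ i) + δ i| := by ring_nf
        _ ≤ |(z i : ℝ) - δ i| + |(δ i : ℝ)| := abs_add_le _ _
    nlinarith
  have hsplitf : ∑' z : A, f z + ∑' z : ↥Aᶜ, f z = ∑' z, f z :=
    Summable.tsum_add_tsum_compl (hsum.subtype A) (hsum.subtype Aᶜ)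
  have hsplitg : ∑' z : A, g z + ∑' z : ↥Aᶜ, g z = ∑' z, g z :=
    Summable.tsum_add_tsum_compl (hgsum.subtype A) (hgsum.subtype Aᶜ)
  have hcomp : ∑' z : ↥Aᶜ, g z ≤ C * ∑' z : ↥Aᶜ, f z := by
    rw [← tsum_mul_left]
    exact Summable.tsum_le_tsum (fun z => hC z) (hgsum.subtype Aᶜ) ((hsum.subtype Aᶜ).mul_left C)
  have hfA : a * ∑' z : A, f z ≤ a * ∑' z, f z := by
    apply mul_le_mul_of_nonneg_left _ ha.le
    rw [← hsplitf]
    have : 0 ≤ ∑' z : ↥Aᶜ, f z :=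
      tsum_nonneg fun z => (Real.exp_pos _).le
    linarith
  -- rewrite goal
  show 1 - C * (1 - a * ∑' z : A, f z) ≤ a * ∑' z : A, g z
  have key : a * ∑' z : A, g z = 1 - a * ∑' z : ↥Aᶜ, g z := by
    rw [← hnorm, ← htg, ← hsplitg]; ring
  rw [key]
  have h2 : a * ∑' z : ↥Aᶜ, g z ≤ C * (a * ∑' z : ↥Aᶜ, f z) := by
    rw [mul_left_comm]
    exact mul_le_mul_of_nonneg_left hcomp ha.le
  have h3 : a * ∑' z : ↥Aᶜ, f z = 1 - a * ∑' z : A, f z := by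
    rw [← hnorm, ← hsplitf]; ring
  rw [← h3]
  linarith
end

section
/- Let Y be a set of labels, n a positive integer, λ > 0, and let h : ℝⁿ → Y be a function whose label preimages h⁻¹(y) are Lebesgue-measurable. Let μ_λ be the uniform probability measure on the cube [−λ,λ]ⁿ ⊆ ℝⁿ, and for u ∈ ℝⁿ and y ∈ Y define g^y(u) = μ_λ({ρ ∈ [−λ,λ]ⁿ : h(u + ρ) = y}). Suppose y_A ∈ Y and real numbers p_A ≥ p_B in (0,1) satisfy g^{y_A}(u) ≥ p_A and g^y(u) ≤ p_B for every y ≠ y_A. Then for every δ ∈ ℝⁿ with ‖δ‖₁ ≤ λ·(p_A − p_B) and every y ≠ y_A, it holds that g^{y_A}(u + δ) ≥ g^y(u + δ). -/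
open MeasureTheory
open scoped BigOperators

/-- The uniform probability measure on the cube `[−λ, λ]ⁿ ⊆ ℝⁿ`: Lebesgue measure
restricted to the cube and normalized by `(2λ)⁻ⁿ`. -/
noncomputable def cubeUniform (n : ℕ) (lam : ℝ) : Measure (Fin n → ℝ) :=
  (ENNReal.ofReal ((2 * lam) ^ n))⁻¹ •
    volume.restrict (Set.univ.pi fun _ : Fin n => Set.Icc (-lam) lam)

lemma interval_diff_vol {lam : ℝ} (d : ℝ) :
    volume (Set.Icc (-lam + d) (lam + d) \ Set.Icc (-lam) lam) ≤ ENNReal.ofReal |d| := by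
  rcases le_or_gt 0 d with hd | hd
  · have hsub : Set.Icc (-lam + d) (lam + d) \ Set.Icc (-lam) lam ⊆
        Set.Ioc lam (lam + d) := by
      rintro x ⟨⟨h1, h2⟩, h3⟩
      simp only [Set.mem_Icc, not_and, not_le] at h3
      exact ⟨h3 (by linarith), h2⟩
    calc volume _ ≤ volume (Set.Ioc lam (lam + d)) := measure_mono hsub
      _ = ENNReal.ofReal d := by rw [Real.volume_Ioc]; ring_nf
      _ ≤ ENNReal.ofReal |d| := ENNReal.ofReal_le_ofReal (le_abs_self d)
  · have hsub : Set.Icc (-lam + d) (lam + d) \ Set.Icc (-lam) lam ⊆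
        Set.Ico (-lam + d) (-lam) := by
      rintro x ⟨⟨h1, h2⟩, h3⟩
      simp only [Set.mem_Icc, not_and, not_le] at h3
      refine ⟨h1, ?_⟩
      by_contra hc
      push_neg at hc
      exact absurd (h3 hc) (by linarith)
    calc volume _ ≤ volume (Set.Ico (-lam + d) (-lam)) := measure_mono hsub
      _ = ENNReal.ofReal (-d) := by rw [Real.volume_Ico]; ring_nf
      _ ≤ ENNReal.ofReal |d| := ENNReal.ofReal_le_ofReal (neg_le_abs d)

/-- The shifted cube minus the cube has volume at most `∑|vᵢ| (2λ)^(n-1)`. -/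
lemma slab_bound {n : ℕ} {lam : ℝ} (hlam : 0 < lam) (v : Fin n → ℝ) :
    volume ((Set.univ.pi fun i => Set.Icc (-lam + v i) (lam + v i)) \
      (Set.univ.pi fun _ : Fin n => Set.Icc (-lam) lam))
      ≤ ENNReal.ofReal ((∑ i, |v i|) * (2 * lam) ^ (n - 1)) := by
  set S : Fin n → Set (Fin n → ℝ) := fun i => Set.univ.pi (fun j =>
    if j = i then Set.Icc (-lam + v i) (lam + v i) \ Set.Icc (-lam) lam
    else Set.Icc (-lam + v j) (lam + v j)) with hS
  have hsub : (Set.univ.pi fun i => Set.Icc (-lam + v i) (lam + v i)) \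
      (Set.univ.pi fun _ : Fin n => Set.Icc (-lam) lam) ⊆ ⋃ i, S i := by
    rintro x ⟨hx1, hx2⟩
    simp only [Set.mem_pi, Set.mem_univ, forall_true_left] at hx1 hx2
    push_neg at hx2
    obtain ⟨i, hi⟩ := hx2
    refine Set.mem_iUnion.2 ⟨i, ?_⟩
    intro j _
    by_cases hj : j = i
    · subst hj
      simp only [if_pos rfl]
      exact ⟨hx1 j, hi⟩
    · simp only [if_neg hj]
      exact hx1 j
  have hvol : ∀ i, volume (S i) ≤ ENNReal.ofReal (|v i| * (2 * lam) ^ (n - 1)) := by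
    intro i
    rw [hS]
    rw [volume_pi_pi]
    have hcard : (Finset.univ.erase i).card = n - 1 := by
      rw [Finset.card_erase_of_mem (Finset.mem_univ i), Finset.card_univ, Fintype.card_fin]
    calc (∏ j, volume (if j = i then Set.Icc (-lam + v i) (lam + v i) \ Set.Icc (-lam) lam
            else Set.Icc (-lam + v j) (lam + v j)))
        = volume (Set.Icc (-lam + v i) (lam + v i) \ Set.Icc (-lam) lam) *
            ∏ j ∈ Finset.univ.erase i, volume (Set.Icc (-lam + v j) (lam + v j)) := by
          rw [← Finset.mul_prod_erase _ _ (Finset.mem_univ i), if_pos rfl]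
          congr 1
          apply Finset.prod_congr rfl
          intro j hj
          rw [if_neg (Finset.ne_of_mem_erase hj)]
      _ ≤ ENNReal.ofReal |v i| * ∏ j ∈ Finset.univ.erase i, ENNReal.ofReal (2 * lam) := by
          gcongr
          · exact interval_diff_vol (v i)
          · rw [Real.volume_Icc]
            apply ENNReal.ofReal_le_ofReal; ring_nf; linarith
      _ = ENNReal.ofReal |v i| * ENNReal.ofReal (2 * lam) ^ (n - 1) := by
          rw [Finset.prod_const, hcard]
      _ = ENNReal.ofReal (|v i| * (2 * lam) ^ (n - 1)) := by
          rw [← ENNReal.ofReal_pow (by linarith), ← ENNReal.ofReal_mul (abs_nonneg _)]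
  calc volume _ ≤ volume (⋃ i, S i) := measure_mono hsub
    _ ≤ ∑ i, volume (S i) := measure_iUnion_fintype_le _ _
    _ ≤ ∑ i, ENNReal.ofReal (|v i| * (2 * lam) ^ (n - 1)) := Finset.sum_le_sum fun i _ => hvol i
    _ = ENNReal.ofReal ((∑ i, |v i|) * (2 * lam) ^ (n - 1)) := by
        rw [Finset.sum_mul, ← ENNReal.ofReal_sum_of_nonneg]
        intro i _
        positivity

/-- Theorem 2 of the paper: the classifier smoothed with uniform noise on `[−λ,λ]ⁿ` is
certifiably robust to any `ℓ₁` perturbation of magnitude at most `RAD_R = λ(p_A − p_B)`. -/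
theorem uniform_certified_robustness
    {Y : Type*} (n : ℕ) (hn : 0 < n) (lam : ℝ) (hlam : 0 < lam)
    (h : (Fin n → ℝ) → Y) (hmeas : ∀ y : Y, MeasurableSet {x | h x = y})
    (u : Fin n → ℝ) (yA : Y) (pA pB : ℝ)
    (hpB : 0 < pB) (hBA : pB ≤ pA) (hpA : pA < 1)
    (hA : ENNReal.ofReal pA ≤ cubeUniform n lam {ρ | h (u + ρ) = yA})
    (hB : ∀ y : Y, y ≠ yA → cubeUniform n lam {ρ | h (u + ρ) = y} ≤ ENNReal.ofReal pB)
    (δ : Fin n → ℝ) (hδ : (∑ i, |δ i|) ≤ lam * (pA - pB))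
    (y : Y) (hy : y ≠ yA) :
    cubeUniform n lam {ρ | h (u + δ + ρ) = y}
      ≤ cubeUniform n lam {ρ | h (u + δ + ρ) = yA} := by
  classical
  set C : Set (Fin n → ℝ) := Set.univ.pi fun _ : Fin n => Set.Icc (-lam) lam with hC
  set Cp : Set (Fin n → ℝ) := Set.univ.pi fun i => Set.Icc (-lam + δ i) (lam + δ i) with hCp
  have hCmeas : MeasurableSet C := MeasurableSet.univ_pi fun _ => measurableSet_Icc
  have hCpmeas : MeasurableSet Cp := MeasurableSet.univ_pi fun _ => measurableSet_Icc
  set c : ENNReal := (ENNReal.ofReal ((2 * lam) ^ n))⁻¹ with hc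
  set T : Y → Set (Fin n → ℝ) := fun y' => {σ | h (u + σ) = y'} with hT
  have hTmeas : ∀ y', MeasurableSet (T y') :=
    fun y' => (hmeas y').preimage (measurable_const_add u)
  -- cubeUniform of a set
  have happ : ∀ s : Set (Fin n → ℝ), MeasurableSet s →
      cubeUniform n lam s = c * volume (s ∩ C) := by
    intro s hs
    rw [cubeUniform, Measure.smul_apply, smul_eq_mul, Measure.restrict_apply hs]
  -- shift identity
  have hshift : ∀ y', {ρ | h (u + δ + ρ) = y'} = (fun ρ => δ + ρ) ⁻¹' (T y') := by
    intro y'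
    ext ρ
    simp only [Set.mem_setOf_eq, Set.mem_preimage, hT, add_assoc]
  have hshiftmeas : ∀ y', MeasurableSet {ρ | h (u + δ + ρ) = y'} := by
    intro y'
    rw [hshift]
    exact (hTmeas y').preimage (measurable_const_add δ)
  -- preimage of shifted cube
  have hpreCp : (fun ρ => δ + ρ) ⁻¹' Cp = C := by
    ext x
    simp only [Set.mem_preimage, hCp, hC, Set.mem_pi, Set.mem_univ, forall_true_left,
      Set.mem_Icc, Pi.add_apply]
    constructor
    · intro hx i; have := hx i; constructor <;> linarith [(this).1, (this).2]
    · intro hx i; have := hx i; constructor <;> linarith [(this).1, (this).2]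
  have hpreC : (fun ρ => δ + ρ) ⁻¹' C = Set.univ.pi fun i => Set.Icc (-lam + (-δ) i) (lam + (-δ) i) := by
    ext x
    simp only [Set.mem_preimage, hC, Set.mem_pi, Set.mem_univ, forall_true_left,
      Set.mem_Icc, Pi.add_apply, Pi.neg_apply]
    constructor
    · intro hx i; have := hx i; constructor <;> linarith [(this).1, (this).2]
    · intro hx i; have := hx i; constructor <;> linarith [(this).1, (this).2]
  -- key computation: measure after shift
  have hkey : ∀ y', cubeUniform n lam {ρ | h (u + δ + ρ) = y'} = c * volume (T y' ∩ Cp) := by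
    intro y'
    rw [happ _ (hshiftmeas y'), hshift]
    congr 1
    have : (fun ρ => δ + ρ) ⁻¹' (T y') ∩ C = (fun ρ => δ + ρ) ⁻¹' (T y' ∩ Cp) := by
      rw [Set.preimage_inter, hpreCp]
    rw [this, measure_preimage_add]
  -- the error bounds
  set E : ENNReal := ENNReal.ofReal ((∑ i, |δ i|) * (2 * lam) ^ (n - 1)) with hE
  have hE1 : volume (Cp \ C) ≤ E := slab_bound hlam δ
  have hE2 : volume (C \ Cp) ≤ E := by
    have : volume (C \ Cp) = volume ((Set.univ.pi fun i => Set.Icc (-lam + (-δ) i) (lam + (-δ) i)) \ C) := by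
      rw [← measure_preimage_add volume δ (C \ Cp), Set.preimage_diff, hpreC, hpreCp]
    rw [this]
    calc _ ≤ ENNReal.ofReal ((∑ i, |(-δ) i|) * (2 * lam) ^ (n - 1)) := slab_bound hlam (-δ)
      _ = E := by simp [hE, abs_neg]
  -- c * E computation
  have htot_pos : (0:ℝ) < (2 * lam) ^ n := by positivity
  have hcE : c * E = ENNReal.ofReal ((∑ i, |δ i|) / (2 * lam)) := by
    rw [hc, hE, ← ENNReal.div_eq_inv_mul, ← ENNReal.ofReal_div_of_pos htot_pos]
    congr 1
    have hn' : (2 * lam) ^ n = (2 * lam) ^ (n - 1) * (2 * lam) := by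
      rw [← pow_succ, Nat.sub_add_cancel hn]
    rw [hn']
    field_simp
  have hcE_ne_top : c * E ≠ ⊤ := by rw [hcE]; exact ENNReal.ofReal_ne_top
  -- bounds on measures at u
  have hAeq : cubeUniform n lam {ρ | h (u + ρ) = yA} = c * volume (T yA ∩ C) :=
    happ _ ((hTmeas yA))
  have hBeq : cubeUniform n lam {ρ | h (u + ρ) = y} = c * volume (T y ∩ C) :=
    happ _ ((hTmeas y))
  -- upper bound on perturbed measure of y
  have hy_up : cubeUniform n lam {ρ | h (u + δ + ρ) = y} ≤ ENNReal.ofReal pB + c * E := by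
    rw [hkey]
    have hsub : T y ∩ Cp ⊆ (T y ∩ C) ∪ (Cp \ C) := by
      rintro x ⟨hx1, hx2⟩
      by_cases hx3 : x ∈ C
      · exact Or.inl ⟨hx1, hx3⟩
      · exact Or.inr ⟨hx2, hx3⟩
    calc c * volume (T y ∩ Cp) ≤ c * (volume (T y ∩ C) + volume (Cp \ C)) := by
          gcongr
          exact (measure_mono hsub).trans (measure_union_le _ _)
      _ = c * volume (T y ∩ C) + c * volume (Cp \ C) := by rw [mul_add]
      _ ≤ ENNReal.ofReal pB + c * E := by
          gcongr
          · rw [← hBeq]; exact hB y hy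
  -- lower bound on perturbed measure of yA
  have hA_low : ENNReal.ofReal pA ≤ cubeUniform n lam {ρ | h (u + δ + ρ) = yA} + c * E := by
    rw [hkey]
    have hsub : T yA ∩ C ⊆ (T yA ∩ Cp) ∪ (C \ Cp) := by
      rintro x ⟨hx1, hx2⟩
      by_cases hx3 : x ∈ Cp
      · exact Or.inl ⟨hx1, hx3⟩
      · exact Or.inr ⟨hx2, hx3⟩
    calc ENNReal.ofReal pA ≤ c * volume (T yA ∩ C) := by rw [← hAeq]; exact hA
      _ ≤ c * (volume (T yA ∩ Cp) + volume (C \ Cp)) := by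
          gcongr
          exact (measure_mono hsub).trans (measure_union_le _ _)
      _ = c * volume (T yA ∩ Cp) + c * volume (C \ Cp) := by rw [mul_add]
      _ ≤ c * volume (T yA ∩ Cp) + c * E := by gcongr
  -- arithmetic: pB + 2(c*E) ≤ pA
  have hsum_nonneg : (0:ℝ) ≤ ∑ i, |δ i| := Finset.sum_nonneg fun i _ => abs_nonneg _
  have harith : ENNReal.ofReal pB + c * E + c * E ≤ ENNReal.ofReal pA := by
    rw [hcE, ← ENNReal.ofReal_add hpB.le (by positivity), ← ENNReal.ofReal_add (by positivity) (by positivity)]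
    apply ENNReal.ofReal_le_ofReal
    have : (∑ i, |δ i|) / (2 * lam) ≤ (pA - pB) / 2 := by
      rw [div_le_div_iff₀ (by linarith) (by norm_num)]
      nlinarith
    linarith
  -- conclude by cancellation
  have hfinal : cubeUniform n lam {ρ | h (u + δ + ρ) = y} + c * E ≤
      cubeUniform n lam {ρ | h (u + δ + ρ) = yA} + c * E := by
    calc cubeUniform n lam {ρ | h (u + δ + ρ) = y} + c * E
        ≤ ENNReal.ofReal pB + c * E + c * E := by gcongr
      _ ≤ ENNReal.ofReal pA := harith
      _ ≤ _ := hA_low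
  exact ENNReal.le_of_add_le_add_right hcE_ne_top hfinal
end

section
/- Let n be a positive integer, λ > 0, and let h : ℝⁿ → ℝ be a Lebesgue-measurable function with 0 ≤ h(x) ≤ 1 for all x. Define g : ℝⁿ → ℝ by g(u) = (2λ)⁻ⁿ · ∫_{[−λ,λ]ⁿ} h(u + ρ) dρ (Lebesgue integral over the cube). Then g is (1/(2λ))-Lipschitz with respect to the ℓ₁ norm: for all u, v ∈ ℝⁿ, |g(u) − g(v)| ≤ (1/(2λ))·‖u − v‖₁. -/
open MeasureTheory
open scoped BigOperators

/-- 1D: volume of the difference of two length-`2λ` intervals is at most `|a - b|`. -/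
lemma icc_diff_volume_le (lam a b : ℝ) :
    volume (Set.Icc (a - lam) (a + lam) \ Set.Icc (b - lam) (b + lam))
      ≤ ENNReal.ofReal |a - b| := by
  rcases le_total a b with hab | hab
  · have hsub : Set.Icc (a - lam) (a + lam) \ Set.Icc (b - lam) (b + lam)
        ⊆ Set.Ico (a - lam) (b - lam) := by
      intro x hx
      obtain ⟨⟨h1, h2⟩, h3⟩ := hx
      simp only [Set.mem_Icc, not_and, not_le] at h3
      rcases lt_or_ge x (b - lam) with hlt | hge
      · exact ⟨h1, hlt⟩
      · exact absurd (h3 hge) (by linarith)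
    calc volume (Set.Icc (a - lam) (a + lam) \ Set.Icc (b - lam) (b + lam))
        ≤ volume (Set.Ico (a - lam) (b - lam)) := measure_mono hsub
      _ = ENNReal.ofReal (b - lam - (a - lam)) := Real.volume_Ico
      _ = ENNReal.ofReal |a - b| := by rw [abs_sub_comm, abs_of_nonneg (by linarith)]; ring_nf
  · have hsub : Set.Icc (a - lam) (a + lam) \ Set.Icc (b - lam) (b + lam)
        ⊆ Set.Ioc (b + lam) (a + lam) := by
      intro x hx
      obtain ⟨⟨h1, h2⟩, h3⟩ := hx
      simp only [Set.mem_Icc, not_and, not_le] at h3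
      have hbx : b - lam ≤ x := by linarith
      exact ⟨h3 hbx, h2⟩
    calc volume (Set.Icc (a - lam) (a + lam) \ Set.Icc (b - lam) (b + lam))
        ≤ volume (Set.Ioc (b + lam) (a + lam)) := measure_mono hsub
      _ = ENNReal.ofReal (a + lam - (b + lam)) := Real.volume_Ioc
      _ = ENNReal.ofReal |a - b| := by rw [abs_of_nonneg (by linarith)]; ring_nf

/-- Proposition 1 of the paper: the smoothing
`g(u) = (2λ)⁻ⁿ ∫_{[−λ,λ]ⁿ} h(u + ρ) dρ` of a `[0,1]`-valued measurable function `h` by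
uniform noise on the cube `[−λ,λ]ⁿ` is `(1/(2λ))`-Lipschitz in the `ℓ₁` norm. -/
theorem uniform_smoothing_lipschitz
    (n : ℕ) (hn : 0 < n) (lam : ℝ) (hlam : 0 < lam)
    (h : (Fin n → ℝ) → ℝ) (hmeas : Measurable h) (hbd : ∀ x, h x ∈ Set.Icc (0 : ℝ) 1)
    (u v : Fin n → ℝ) :
    |((2 * lam) ^ n)⁻¹ *
          (∫ ρ in Set.univ.pi fun _ : Fin n => Set.Icc (-lam) lam, h (u + ρ))
        - ((2 * lam) ^ n)⁻¹ *
          (∫ ρ in Set.univ.pi fun _ : Fin n => Set.Icc (-lam) lam, h (v + ρ))|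
      ≤ (1 / (2 * lam)) * ∑ i, |u i - v i| := by
  set C : Set (Fin n → ℝ) := Set.univ.pi fun _ : Fin n => Set.Icc (-lam) lam with hCdef
  set A : (Fin n → ℝ) → Set (Fin n → ℝ) :=
    fun w => Set.univ.pi fun i => Set.Icc (w i - lam) (w i + lam) with hAdef
  have hCmeas : MeasurableSet C :=
    MeasurableSet.univ_pi fun _ => measurableSet_Icc
  have hAmeas : ∀ w, MeasurableSet (A w) :=
    fun w => MeasurableSet.univ_pi fun _ => measurableSet_Icc
  have hAfin : ∀ w, volume (A w) < ⊤ := fun w =>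
    (isCompact_univ_pi fun i => isCompact_Icc).measure_lt_top
  -- Step 1: translation
  have key : ∀ w : Fin n → ℝ,
      (∫ ρ in C, h (w + ρ)) = ∫ x in A w, h x := by
    intro w
    have hmem : ∀ ρ : Fin n → ℝ, w + ρ ∈ A w ↔ ρ ∈ C := by
      intro ρ
      simp only [hAdef, hCdef, Set.mem_univ_pi, Set.mem_Icc, Pi.add_apply]
      constructor <;> intro H i <;> obtain ⟨h1, h2⟩ := H i <;> exact ⟨by linarith, by linarith⟩
    rw [← integral_indicator hCmeas, ← integral_indicator (hAmeas w)]
    rw [← integral_add_left_eq_self (fun x => (A w).indicator h x) w]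
    congr 1
    funext ρ
    by_cases hρ : ρ ∈ C
    · rw [Set.indicator_of_mem ((hmem ρ).2 hρ), Set.indicator_of_mem hρ]
    · rw [Set.indicator_of_notMem (fun hc => hρ ((hmem ρ).1 hc)),
        Set.indicator_of_notMem hρ]
  -- Integrability on any measurable subset of finite measure
  have hint : ∀ S : Set (Fin n → ℝ), volume S < ⊤ → IntegrableOn h S volume := by
    intro S hS
    refine Integrable.mono' (g := fun _ => (1 : ℝ)) (integrableOn_const hS.ne)
      hmeas.aestronglyMeasurable.restrict ?_
    filter_upwards with x
    rw [Real.norm_eq_abs, abs_of_nonneg (hbd x).1]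
    exact (hbd x).2
  -- bound on set integrals
  have hle : ∀ S : Set (Fin n → ℝ), MeasurableSet S → volume S < ⊤ →
      (∫ x in S, h x) ≤ (volume S).toReal := by
    intro S hSm hSf
    have := norm_setIntegral_le_of_norm_le_const (μ := volume) (f := h) (C := 1) hSf
      (fun x _ => by rw [Real.norm_eq_abs, abs_of_nonneg (hbd x).1]; exact (hbd x).2)
    rw [one_mul] at this
    exact le_trans (le_abs_self _) this
  have hnn : ∀ S : Set (Fin n → ℝ), MeasurableSet S → 0 ≤ ∫ x in S, h x :=
    fun S hSm => setIntegral_nonneg hSm fun x _ => (hbd x).1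
  -- Volume of one-sided difference of cubes
  have hvol : ∀ a b : Fin n → ℝ,
      volume (A a \ A b) ≤ ENNReal.ofReal ((2 * lam) ^ (n - 1) * ∑ i, |a i - b i|) := by
    intro a b
    set T : Fin n → Fin n → Set ℝ := fun i j =>
      if j = i then Set.Icc (a i - lam) (a i + lam) \ Set.Icc (b i - lam) (b i + lam)
      else Set.Icc (a j - lam) (a j + lam) with hTdef
    have hsub : A a \ A b ⊆ ⋃ i, Set.univ.pi (T i) := by
      intro x hx
      obtain ⟨hxa, hxb⟩ := hx
      simp only [hAdef, Set.mem_univ_pi, Set.mem_Icc] at hxa hxb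
      push_neg at hxb
      obtain ⟨i, hi⟩ := hxb
      refine Set.mem_iUnion.2 ⟨i, ?_⟩
      intro j _
      simp only [hTdef]
      by_cases hji : j = i
      · subst hji
        simp only [if_pos rfl]
        refine ⟨hxa j, ?_⟩
        rintro ⟨hc1, hc2⟩
        exact absurd (hi hc1) (not_lt.2 hc2)
      · simp only [if_neg hji, Set.mem_Icc]
        exact hxa j
    have hvolT : ∀ i, volume (Set.univ.pi (T i))
        ≤ ENNReal.ofReal |a i - b i| * ENNReal.ofReal (2 * lam) ^ (n - 1) := by
      intro i
      rw [volume_pi_pi]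
      rw [← Finset.mul_prod_erase Finset.univ _ (Finset.mem_univ i)]
      have h1 : volume (T i i) ≤ ENNReal.ofReal |a i - b i| := by
        simp only [hTdef, if_pos rfl]
        exact icc_diff_volume_le lam (a i) (b i)
      have h2 : ∏ j ∈ Finset.univ.erase i, volume (T i j)
          = ENNReal.ofReal (2 * lam) ^ (n - 1) := by
        have : ∀ j ∈ Finset.univ.erase i, volume (T i j) = ENNReal.ofReal (2 * lam) := by
          intro j hj
          have hji : j ≠ i := Finset.ne_of_mem_erase hj
          simp only [hTdef, if_neg hji, Real.volume_Icc]
          congr 1; ring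
        rw [Finset.prod_congr rfl this, Finset.prod_const, Finset.card_erase_of_mem
          (Finset.mem_univ i), Finset.card_univ, Fintype.card_fin]
      rw [h2]
      exact mul_le_mul_left h1 _
    calc volume (A a \ A b) ≤ volume (⋃ i, Set.univ.pi (T i)) := measure_mono hsub
      _ ≤ ∑ i, volume (Set.univ.pi (T i)) := measure_iUnion_fintype_le _ _
      _ ≤ ∑ i, ENNReal.ofReal |a i - b i| * ENNReal.ofReal (2 * lam) ^ (n - 1) :=
          Finset.sum_le_sum fun i _ => hvolT i
      _ = ∑ i, ENNReal.ofReal (|a i - b i| * (2 * lam) ^ (n - 1)) := by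
          refine Finset.sum_congr rfl fun i _ => ?_
          rw [← ENNReal.ofReal_pow (by positivity), ← ENNReal.ofReal_mul (by positivity)]
      _ = ENNReal.ofReal (∑ i, |a i - b i| * (2 * lam) ^ (n - 1)) :=
          (ENNReal.ofReal_sum_of_nonneg (fun i _ => by positivity)).symm
      _ = ENNReal.ofReal ((2 * lam) ^ (n - 1) * ∑ i, |a i - b i|) := by
          rw [← Finset.sum_mul, mul_comm]
  -- set M as the real bound
  set M : ℝ := (2 * lam) ^ (n - 1) * ∑ i, |u i - v i| with hMdef
  have hMnn : 0 ≤ M := by positivity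
  have habs : ∀ i, |u i - v i| = |v i - u i| := fun i => abs_sub_comm _ _
  have hvolR1 : (volume (A u \ A v)).toReal ≤ M :=
    ENNReal.toReal_le_of_le_ofReal hMnn (hvol u v)
  have hvolR2 : (volume (A v \ A u)).toReal ≤ M := by
    refine ENNReal.toReal_le_of_le_ofReal hMnn (le_trans (hvol v u) (le_of_eq ?_))
    congr 1
    rw [hMdef]
    congr 1
    exact Finset.sum_congr rfl fun i _ => (habs i).symm
  -- split the integrals
  have hsplit : ∀ a b : Fin n → ℝ,
      (∫ x in A a, h x) = (∫ x in A a ∩ A b, h x) + ∫ x in A a \ A b, h x := by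
    intro a b
    have hdisj : Disjoint (A a ∩ A b) (A a \ A b) :=
      Set.disjoint_left.2 fun x hx hx2 => hx2.2 hx.2
    have hu : A a ∩ A b ∪ A a \ A b = A a := Set.inter_union_diff _ _
    conv_lhs => rw [← hu]
    rw [setIntegral_union hdisj ((hAmeas a).diff (hAmeas b))
      ((hint _ (lt_of_le_of_lt (measure_mono Set.inter_subset_left) (hAfin a))).mono_set
        (subset_refl _))
      (hint _ (lt_of_le_of_lt (measure_mono Set.diff_subset) (hAfin a)))]
  have hdiff_le1 : (∫ x in A u \ A v, h x) ≤ M :=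
    le_trans (hle _ ((hAmeas u).diff (hAmeas v))
      (lt_of_le_of_lt (measure_mono Set.diff_subset) (hAfin u))) hvolR1
  have hdiff_le2 : (∫ x in A v \ A u, h x) ≤ M :=
    le_trans (hle _ ((hAmeas v).diff (hAmeas u))
      (lt_of_le_of_lt (measure_mono Set.diff_subset) (hAfin v))) hvolR2
  have hdiff_nn : ∀ a b : Fin n → ℝ, 0 ≤ ∫ x in A a \ A b, h x :=
    fun a b => hnn _ ((hAmeas a).diff (hAmeas b))
  -- main inequality on the raw integrals
  have hmain : |(∫ x in A u, h x) - ∫ x in A v, h x| ≤ M := by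
    rw [hsplit u v, hsplit v u, Set.inter_comm (A v) (A u)]
    have e : (∫ x in A u ∩ A v, h x) + (∫ x in A u \ A v, h x)
        - ((∫ x in A u ∩ A v, h x) + ∫ x in A v \ A u, h x)
        = (∫ x in A u \ A v, h x) - ∫ x in A v \ A u, h x := by ring
    rw [e, abs_sub_le_iff]
    constructor
    · linarith [hdiff_le1, hdiff_nn v u]
    · linarith [hdiff_le2, hdiff_nn u v]
  -- conclude
  rw [key u, key v, ← mul_sub, abs_mul, abs_of_nonneg (by positivity : (0:ℝ) ≤ ((2*lam)^n)⁻¹)]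
  calc ((2 * lam) ^ n)⁻¹ * |(∫ x in A u, h x) - ∫ x in A v, h x|
      ≤ ((2 * lam) ^ n)⁻¹ * M := by
        exact mul_le_mul_of_nonneg_left hmain (by positivity)
    _ = (1 / (2 * lam)) * ∑ i, |u i - v i| := by
        rw [hMdef]
        have hne : (2 * lam) ≠ 0 := by positivity
        have hpow : (2 * lam) * (2 * lam) ^ (n - 1) = (2 * lam) ^ n := by
          rw [← pow_succ']
          congr 1
          omega
        rw [← hpow]
        field_simp
end

section
/- Let (Ω₁, μ₁) and (Ω₂, μ₂) be probability spaces, let U, U', W, W' be measurable spaces, let Y be a countable set of labels, and let θ : U → Ω₁ → U' and φ : W → Ω₂ → W' be maps such that θ(u, ·) and φ(w, ·) are measurable for every u and w, and h : U' × W' → Y be measurable. For u ∈ U, w ∈ W, y ∈ Y define q_y(u, w) = (μ₁ × μ₂)({(ω₁, ω₂) : h(θ(u, ω₁), φ(w, ω₂)) = y}). Assume the law of θ(u, ·) under μ₁ does not depend on u, i.e., the pushforward measures satisfy (θ(u₁, ·))_*μ₁ = (θ(u₂, ·))_*μ₁ for all u₁, u₂ ∈ U. Suppose u, u_δ ∈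 U and w, w_δ ∈ W satisfy q_y(u, w_δ) = q_y(u, w) for every y ∈ Y. Then q_y(u_δ, w_δ) = q_y(u, w) for every y ∈ Y. -/
open MeasureTheory

lemma q_eq {Ω₁ Ω₂ : Type*} [MeasurableSpace Ω₁] [MeasurableSpace Ω₂]
    (μ₁ : Measure Ω₁) (μ₂ : Measure Ω₂)
    [IsProbabilityMeasure μ₁] [IsProbabilityMeasure μ₂]
    {U' W' : Type*} [MeasurableSpace U'] [MeasurableSpace W']
    {Y : Type*} [MeasurableSpace Y] [MeasurableSingletonClass Y]
    (f : Ω₁ → U') (g : Ω₂ → W') (hf : Measurable f) (hg : Measurable g)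
    (h : U' × W' → Y) (hh : Measurable h) (y : Y) :
    (μ₁.prod μ₂) {ω : Ω₁ × Ω₂ | h (f ω.1, g ω.2) = y}
      = ((μ₁.map f).prod (μ₂.map g)) {p | h p = y} := by
  rw [Measure.map_prod_map _ _ hf hg,
    show ({p | h p = y} : Set (U' × W')) = h ⁻¹' {y} from rfl,
    Measure.map_apply (hf.prodMap hg) (hh (measurableSet_singleton y))]
  rfl

/-- Theorem 4 of the paper: if the smoothed classifier's class probabilities are unchanged
by an embedding perturbation (`w ↦ w_δ`), and the law of the randomly permuted position
component `θ(u, ·)` does not depend on `u`, then the class probabilities are unchanged by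
the combination of the permutation perturbation (`u ↦ u_δ`) and the embedding
perturbation. -/
theorem combination_of_perturbations
    {Ω₁ Ω₂ : Type*} [MeasurableSpace Ω₁] [MeasurableSpace Ω₂]
    (μ₁ : Measure Ω₁) (μ₂ : Measure Ω₂)
    [IsProbabilityMeasure μ₁] [IsProbabilityMeasure μ₂]
    {U W : Type*} {U' W' : Type*} [MeasurableSpace U'] [MeasurableSpace W']
    {Y : Type*} [Countable Y] [MeasurableSpace Y] [MeasurableSingletonClass Y]
    (θ : U → Ω₁ → U') (φ : W → Ω₂ → W')
    (hθ : ∀ u : U, Measurable (θ u)) (hφ : ∀ w : W, Measurable (φ w))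
    (h : U' × W' → Y) (hh : Measurable h)
    (hlaw : ∀ u₁ u₂ : U, Measure.map (θ u₁) μ₁ = Measure.map (θ u₂) μ₁)
    (u uδ : U) (w wδ : W)
    (hemb : ∀ y : Y,
      (μ₁.prod μ₂) {ω : Ω₁ × Ω₂ | h (θ u ω.1, φ wδ ω.2) = y}
        = (μ₁.prod μ₂) {ω : Ω₁ × Ω₂ | h (θ u ω.1, φ w ω.2) = y}) :
    ∀ y : Y,
      (μ₁.prod μ₂) {ω : Ω₁ × Ω₂ | h (θ uδ ω.1, φ wδ ω.2) = y}
        = (μ₁.prod μ₂) {ω : Ω₁ × Ω₂ | h (θ u ω.1, φ w ω.2) = y} := by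
  intro y
  rw [q_eq μ₁ μ₂ (θ uδ) (φ wδ) (hθ uδ) (hφ wδ) h hh y, hlaw uδ u,
    ← q_eq μ₁ μ₂ (θ u) (φ wδ) (hθ u) (hφ wδ) h hh y, hemb y]
end

section
/- Let Y be a set of labels, let n be a positive integer, p ∈ (0,1), and δ a natural number with δ ≤ n. Define P_W(z) = C(n,z)·p^z·(1−p)^{n−z} for 0 ≤ z ≤ n, and P_V(z) = C(n−δ, z−δ)·p^{z−δ}·(1−p)^{n−z} for δ ≤ z ≤ n and P_V(z) = 0 for z < δ. Let h : {0,1,…,n} → Y be any function. Suppose y_A ∈ Y, real numbers 0 < p_B ≤ p_A satisfy: ∑_{z=δ}^{n} P_W(z)·1[h(z) = y_A] ≥ p_A, and for every y ≠ y_A, ∑_{z=0}^{n} P_W(z)·1[h(z) = y] ≤ p_B. Let z_max be a natural number such that for every z ≤ n with P_W(z) ≤ p_B one has z ≤ z_max, and assume C(z_max, δ)·p_B ≤ p_A. Then for every y ≠ y_A, ∑_{z=δ}^{n} P_V(z)·1[h(z) = y_A] ≥ ∑_{z=δ}^{n} P_V(z)·1[h(z) = y]. -/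
open scoped BigOperators

/-- Theorem 5 of the paper: certified robustness of the Bernoulli-smoothed classifier
against word deletion, stated at the level of deletion counts. Here
`P_W(z) = C(n,z)·p^z·(1−p)^{n−z}` and, for `δ ≤ z ≤ n`,
`P_V(z) = C(n−δ, z−δ)·p^{z−δ}·(1−p)^{n−z}`. -/
theorem bernoulli_deletion_certified_robustness
    {Y : Type*} [DecidableEq Y]
    (n : ℕ) (hn : 0 < n) (p : ℝ) (hp0 : 0 < p) (hp1 : p < 1)
    (δ : ℕ) (hδ : δ ≤ n) (h : ℕ → Y) (yA : Y) (pA pB : ℝ)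
    (hpB : 0 < pB) (hBA : pB ≤ pA)
    (hA : pA ≤ ∑ z ∈ Finset.Icc δ n,
      ((n.choose z : ℝ) * p ^ z * (1 - p) ^ (n - z)) * (if h z = yA then 1 else 0))
    (hB : ∀ y : Y, y ≠ yA → ∑ z ∈ Finset.range (n + 1),
      ((n.choose z : ℝ) * p ^ z * (1 - p) ^ (n - z)) * (if h z = y then 1 else 0) ≤ pB)
    (zmax : ℕ)
    (hzmax : ∀ z : ℕ, z ≤ n → (n.choose z : ℝ) * p ^ z * (1 - p) ^ (n - z) ≤ pB → z ≤ zmax)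
    (hc : (zmax.choose δ : ℝ) * pB ≤ pA)
    (y : Y) (hy : y ≠ yA) :
    ∑ z ∈ Finset.Icc δ n,
        (((n - δ).choose (z - δ) : ℝ) * p ^ (z - δ) * (1 - p) ^ (n - z)) *
          (if h z = y then 1 else 0)
      ≤ ∑ z ∈ Finset.Icc δ n,
        (((n - δ).choose (z - δ) : ℝ) * p ^ (z - δ) * (1 - p) ^ (n - z)) *
          (if h z = yA then 1 else 0) := by
  have hq : (0:ℝ) < 1 - p := by linarith
  set c : ℝ := (n.choose δ : ℝ) * p ^ δ with hc_def
  have hcpos : 0 < c := by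
    apply mul_pos _ (pow_pos hp0 δ)
    exact_mod_cast Nat.choose_pos hδ
  -- key identity: for δ ≤ z ≤ n,
  -- c * P_V z = C(z,δ) * P_W z
  have key : ∀ z ∈ Finset.Icc δ n,
      c * (((n - δ).choose (z - δ) : ℝ) * p ^ (z - δ) * (1 - p) ^ (n - z))
        = (z.choose δ : ℝ) * ((n.choose z : ℝ) * p ^ z * (1 - p) ^ (n - z)) := by
    intro z hz
    rw [Finset.mem_Icc] at hz
    obtain ⟨h1, h2⟩ := hz
    have hchoose : (n.choose z : ℝ) * (z.choose δ : ℝ) =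
        (n.choose δ : ℝ) * ((n - δ).choose (z - δ) : ℝ) := by
      exact_mod_cast congrArg (Nat.cast (R := ℝ)) (Nat.choose_mul (n := n) h1)
    have hpow : p ^ δ * p ^ (z - δ) = p ^ z := by
      rw [← pow_add, Nat.add_sub_cancel' h1]
    have e : c * (((n - δ).choose (z - δ) : ℝ) * p ^ (z - δ) * (1 - p) ^ (n - z))
        = ((n.choose δ : ℝ) * ((n - δ).choose (z - δ) : ℝ)) *
          ((p ^ δ * p ^ (z - δ)) * (1 - p) ^ (n - z)) := by rw [hc_def]; ring
    rw [e, ← hchoose, hpow]; ring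
  set PW : ℕ → ℝ := fun z => (n.choose z : ℝ) * p ^ z * (1 - p) ^ (n - z) with hPW
  have hPWpos : ∀ z ≤ n, 0 < PW z := by
    intro z hz
    exact mul_pos (mul_pos (by exact_mod_cast Nat.choose_pos hz) (pow_pos hp0 z))
      (pow_pos hq _)
  have hind : ∀ (w : Y) (z : ℕ), (0:ℝ) ≤ (if h z = w then (1:ℝ) else 0) := by
    intro w z; positivity
  rw [← mul_le_mul_iff_right₀ hcpos, Finset.mul_sum, Finset.mul_sum]
  have hrw : ∀ (w : Y), ∑ z ∈ Finset.Icc δ n,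
      c * ((((n - δ).choose (z - δ) : ℝ) * p ^ (z - δ) * (1 - p) ^ (n - z)) *
        (if h z = w then 1 else 0))
      = ∑ z ∈ Finset.Icc δ n, (z.choose δ : ℝ) * PW z * (if h z = w then 1 else 0) := by
    intro w
    refine Finset.sum_congr rfl fun z hz => ?_
    rw [← mul_assoc, key z hz, hPW, mul_assoc]
  rw [hrw y, hrw yA]
  -- upper bound on the y side
  have hBy := hB y hy
  have hsum_le : ∑ z ∈ Finset.Icc δ n, (z.choose δ : ℝ) * PW z * (if h z = y then 1 else 0)
      ≤ (zmax.choose δ : ℝ) * pB := by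
    have step1 : ∑ z ∈ Finset.Icc δ n, (z.choose δ : ℝ) * PW z * (if h z = y then 1 else 0)
        ≤ ∑ z ∈ Finset.Icc δ n, (zmax.choose δ : ℝ) * (PW z * (if h z = y then 1 else 0)) := by
      refine Finset.sum_le_sum fun z hz => ?_
      rw [Finset.mem_Icc] at hz
      by_cases hzy : h z = y
      · simp only [hzy, if_true, mul_one]
        have hle : PW z ≤ pB := by
          calc PW z = PW z * 1 := (mul_one _).symm
            _ = PW z * (if h z = y then 1 else 0) := by rw [if_pos hzy]
            _ ≤ ∑ w ∈ Finset.range (n + 1), PW w * (if h w = y then 1 else 0) := by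
                refine Finset.single_le_sum
                  (f := fun w => PW w * (if h w = y then 1 else 0)) (fun w hw => ?_) ?_
                · exact mul_nonneg (hPWpos w (Nat.lt_succ_iff.mp (Finset.mem_range.mp hw))).le
                    (hind y w)
                · exact Finset.mem_range.mpr (Nat.lt_succ_of_le hz.2)
            _ ≤ pB := hBy
        have hzle : z ≤ zmax := hzmax z hz.2 hle
        have : (z.choose δ : ℝ) ≤ (zmax.choose δ : ℝ) := by
          exact_mod_cast Nat.choose_le_choose δ hzle
        exact mul_le_mul_of_nonneg_right this (hPWpos z hz.2).le
      · simp [hzy]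
    refine step1.trans ?_
    rw [← Finset.mul_sum]
    refine mul_le_mul_of_nonneg_left ?_ (by positivity)
    calc ∑ z ∈ Finset.Icc δ n, PW z * (if h z = y then 1 else 0)
        ≤ ∑ z ∈ Finset.range (n + 1), PW z * (if h z = y then 1 else 0) := by
          refine Finset.sum_le_sum_of_subset_of_nonneg ?_ fun z hz _ => ?_
          · intro z hz
            rw [Finset.mem_Icc] at hz
            exact Finset.mem_range.mpr (Nat.lt_succ_of_le hz.2)
          · exact mul_nonneg (hPWpos z (Nat.lt_succ_iff.mp (Finset.mem_range.mp hz))).le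
              (hind y z)
      _ ≤ pB := hBy
  -- lower bound on the yA side
  have hsum_ge : pA ≤ ∑ z ∈ Finset.Icc δ n, (z.choose δ : ℝ) * PW z * (if h z = yA then 1 else 0) := by
    refine hA.trans (Finset.sum_le_sum fun z hz => ?_)
    rw [Finset.mem_Icc] at hz
    have h1 : (1:ℝ) ≤ (z.choose δ : ℝ) := by
      exact_mod_cast Nat.succ_le_of_lt (Nat.choose_pos hz.1)
    show PW z * (if h z = yA then 1 else 0)
      ≤ (z.choose δ : ℝ) * PW z * (if h z = yA then 1 else 0)
    nlinarith [h1, mul_nonneg (hPWpos z hz.2).le (hind yA z)]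
  linarith [hsum_le, hc, hsum_ge]
end

section
/- Let n be a positive integer, p ∈ (0,1), and δ a natural number with δ ≤ n. Define P_W(z) = C(n,z)·p^z·(1−p)^{n−z} for 0 ≤ z ≤ n, and P_V(z) = C(n−δ, z−δ)·p^{z−δ}·(1−p)^{n−z} for δ ≤ z ≤ n and P_V(z) = 0 for z < δ. Let h : {0,1,…,n} → {0,1} be any function and β ≥ 0 a real number. (1) If Q = {z ∈ {0,…,n} : C(z,δ) ≤ β} and ∑_{z=0}^{n} P_W(z)·1[h(z) = 1] ≥ ∑_{z ∈ Q} P_W(z), then ∑_{z=0}^{n} P_V(z)·1[h(z) = 1] ≥ ∑_{z ∈ Q} P_V(z). (2) If Q = {z ∈ {0,…,n} : C(z,δ) ≥ β} and ∑_{z=0}^{n} P_W(z)·1[h(z) = 1] ≤ ∑_{z ∈ Q} P_W(z), then ∑_{z=0}^{n} P_V(z)·1[h(z) = 1] ≤ ∑_{z ∈ Q} P_V(z). -/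
open scoped BigOperators

/-- The Binomial(n, p) deletion-count probability mass `P_W(z) = C(n,z)·p^z·(1−p)^{n−z}`. -/
noncomputable def PW (n : ℕ) (p : ℝ) (z : ℕ) : ℝ :=
  (n.choose z : ℝ) * p ^ z * (1 - p) ^ (n - z)

/-- The deletion-count probability mass after `δ` words are already deleted:
`P_V(z) = C(n−δ, z−δ)·p^{z−δ}·(1−p)^{n−z}` for `δ ≤ z ≤ n`, and `0` for `z < δ`. -/
noncomputable def PV (n δ : ℕ) (p : ℝ) (z : ℕ) : ℝ :=
  if δ ≤ z then ((n - δ).choose (z - δ) : ℝ) * p ^ (z - δ) * (1 - p) ^ (n - z) else 0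

lemma PW_nonneg (n : ℕ) (p : ℝ) (hp0 : 0 < p) (hp1 : p < 1) (z : ℕ) : 0 ≤ PW n p z := by
  unfold PW
  have h1 : (0:ℝ) ≤ 1 - p := by linarith
  have := Nat.cast_nonneg (α := ℝ) (n.choose z)
  positivity

lemma PV_key (n δ : ℕ) (p : ℝ) (hp0 : 0 < p) (z : ℕ) (hz : z ≤ n) :
    ((n.choose δ : ℝ) * p ^ δ) * PV n δ p z = (z.choose δ : ℝ) * PW n p z := by
  unfold PV PW
  by_cases hδz : δ ≤ z
  · simp only [hδz, if_true]
    have hid : n.choose z * z.choose δ = n.choose δ * (n - δ).choose (z - δ) :=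
      Nat.choose_mul hδz
    have hcast : (n.choose z : ℝ) * (z.choose δ : ℝ)
        = (n.choose δ : ℝ) * ((n - δ).choose (z - δ) : ℝ) := by
      exact_mod_cast congrArg (fun m : ℕ => (m : ℝ)) hid
    have hp : p ^ δ * p ^ (z - δ) = p ^ z := by
      rw [← pow_add, Nat.add_sub_cancel' hδz]
    calc ((n.choose δ : ℝ) * p ^ δ) *
          (((n - δ).choose (z - δ) : ℝ) * p ^ (z - δ) * (1 - p) ^ (n - z))
        = ((n.choose δ : ℝ) * ((n - δ).choose (z - δ) : ℝ)) * (p ^ δ * p ^ (z - δ))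
            * (1 - p) ^ (n - z) := by ring
      _ = (z.choose δ : ℝ) * ((n.choose z : ℝ) * p ^ z * (1 - p) ^ (n - z)) := by
            rw [← hcast, hp]; ring
  · simp only [hδz, if_false]
    have : z.choose δ = 0 := Nat.choose_eq_zero_of_lt (Nat.lt_of_not_le hδz)
    rw [this]
    simp

lemma PV_nonneg (n δ : ℕ) (p : ℝ) (hp0 : 0 < p) (hp1 : p < 1) (z : ℕ) :
    0 ≤ PV n δ p z := by
  unfold PV
  have h1 : (0:ℝ) ≤ 1 - p := by linarith
  split
  · positivity
  · exact le_refl 0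

/-- Lemma 3 of the paper: Neyman–Pearson for Bernoulli noise under different numbers of
ones, for deterministic binary classifiers at the level of deletion counts. -/
theorem neyman_pearson_bernoulli
    (n : ℕ) (hn : 0 < n) (p : ℝ) (hp0 : 0 < p) (hp1 : p < 1)
    (δ : ℕ) (hδ : δ ≤ n) (h : ℕ → Bool) (β : ℝ) (hβ : 0 ≤ β) (Q : Finset ℕ) :
    ((∀ z : ℕ, z ∈ Q ↔ z ≤ n ∧ (z.choose δ : ℝ) ≤ β) →
      ((∑ z ∈ Q, PW n p z)
          ≤ ∑ z ∈ Finset.range (n + 1), PW n p z * (if h z then 1 else 0)) →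
      (∑ z ∈ Q, PV n δ p z)
        ≤ ∑ z ∈ Finset.range (n + 1), PV n δ p z * (if h z then 1 else 0))
    ∧
    ((∀ z : ℕ, z ∈ Q ↔ z ≤ n ∧ β ≤ (z.choose δ : ℝ)) →
      ((∑ z ∈ Finset.range (n + 1), PW n p z * (if h z then 1 else 0))
          ≤ ∑ z ∈ Q, PW n p z) →
      (∑ z ∈ Finset.range (n + 1), PV n δ p z * (if h z then 1 else 0))
        ≤ ∑ z ∈ Q, PV n δ p z) := by
  set S := Finset.range (n + 1) with hS
  set c : ℝ := (n.choose δ : ℝ) * p ^ δ with hc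
  have hcpos : 0 < c := by
    have : 0 < n.choose δ := Nat.choose_pos hδ
    have : (0 : ℝ) < (n.choose δ : ℝ) := by exact_mod_cast this
    positivity
  -- common rewriting for sums over Q
  constructor
  · intro hQ hyp
    have hQsub : Q ⊆ S := by
      intro z hz
      exact Finset.mem_range.mpr (Nat.lt_succ_of_le ((hQ z).mp hz).1)
    have hQsum_V : ∑ z ∈ Q, PV n δ p z
        = ∑ z ∈ S, PV n δ p z * (if z ∈ Q then 1 else 0) := by
      symm
      simp only [mul_ite, mul_one, mul_zero, Finset.sum_ite_mem,
        Finset.inter_eq_right.mpr hQsub]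
    have hQsum_W : ∑ z ∈ Q, PW n p z
        = ∑ z ∈ S, PW n p z * (if z ∈ Q then 1 else 0) := by
      symm
      simp only [mul_ite, mul_one, mul_zero, Finset.sum_ite_mem,
        Finset.inter_eq_right.mpr hQsub]
    have key : 0 ≤ ∑ z ∈ S,
        (((if h z then (1:ℝ) else 0) - (if z ∈ Q then 1 else 0)) *
          (c * PV n δ p z - β * PW n p z)) := by
      apply Finset.sum_nonneg
      intro z hzS
      have hzn : z ≤ n := Nat.lt_succ_iff.mp (Finset.mem_range.mp hzS)
      have hkey : c * PV n δ p z = (z.choose δ : ℝ) * PW n p z :=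
        PV_key n δ p hp0 z hzn
      have hw : 0 ≤ PW n p z := PW_nonneg n p hp0 hp1 z
      by_cases hzQ : z ∈ Q
      · have hle : (z.choose δ : ℝ) ≤ β := ((hQ z).mp hzQ).2
        have h2 : c * PV n δ p z - β * PW n p z ≤ 0 := by
          rw [hkey]; nlinarith
        have h1 : (if h z then (1:ℝ) else 0) - (if z ∈ Q then 1 else 0) ≤ 0 := by
          simp [hzQ]; split <;> norm_num
        nlinarith [mul_nonneg (neg_nonneg.2 h1) (neg_nonneg.2 h2)]
      · have hgt : β < (z.choose δ : ℝ) := by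
          by_contra hle
          exact hzQ ((hQ z).mpr ⟨hzn, le_of_not_gt hle⟩)
        have h2 : 0 ≤ c * PV n δ p z - β * PW n p z := by
          rw [hkey]; nlinarith
        have h1 : 0 ≤ (if h z then (1:ℝ) else 0) - (if z ∈ Q then 1 else 0) := by
          simp [hzQ]; split <;> norm_num
        exact mul_nonneg h1 h2
    have expand : ∑ z ∈ S,
        (((if h z then (1:ℝ) else 0) - (if z ∈ Q then 1 else 0)) *
          (c * PV n δ p z - β * PW n p z))
        = c * (∑ z ∈ S, PV n δ p z * (if h z then 1 else 0))
          - c * (∑ z ∈ S, PV n δ p z * (if z ∈ Q then 1 else 0))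
          - β * (∑ z ∈ S, PW n p z * (if h z then 1 else 0))
          + β * (∑ z ∈ S, PW n p z * (if z ∈ Q then 1 else 0)) := by
      simp only [Finset.mul_sum, ← Finset.sum_sub_distrib, ← Finset.sum_add_distrib]
      apply Finset.sum_congr rfl
      intros; ring
    rw [expand] at key
    rw [hQsum_W] at hyp
    rw [hQsum_V]
    nlinarith
  · intro hQ hyp
    have hQsub : Q ⊆ S := by
      intro z hz
      exact Finset.mem_range.mpr (Nat.lt_succ_of_le ((hQ z).mp hz).1)
    have hQsum_V : ∑ z ∈ Q, PV n δ p z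
        = ∑ z ∈ S, PV n δ p z * (if z ∈ Q then 1 else 0) := by
      symm
      simp only [mul_ite, mul_one, mul_zero, Finset.sum_ite_mem,
        Finset.inter_eq_right.mpr hQsub]
    have hQsum_W : ∑ z ∈ Q, PW n p z
        = ∑ z ∈ S, PW n p z * (if z ∈ Q then 1 else 0) := by
      symm
      simp only [mul_ite, mul_one, mul_zero, Finset.sum_ite_mem,
        Finset.inter_eq_right.mpr hQsub]
    have key : 0 ≤ ∑ z ∈ S,
        (((if z ∈ Q then (1:ℝ) else 0) - (if h z then 1 else 0)) *
          (c * PV n δ p z - β * PW n p z)) := by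
      apply Finset.sum_nonneg
      intro z hzS
      have hzn : z ≤ n := Nat.lt_succ_iff.mp (Finset.mem_range.mp hzS)
      have hkey : c * PV n δ p z = (z.choose δ : ℝ) * PW n p z :=
        PV_key n δ p hp0 z hzn
      have hw : 0 ≤ PW n p z := PW_nonneg n p hp0 hp1 z
      by_cases hzQ : z ∈ Q
      · have hle : β ≤ (z.choose δ : ℝ) := ((hQ z).mp hzQ).2
        have h2 : 0 ≤ c * PV n δ p z - β * PW n p z := by
          rw [hkey]; nlinarith
        have h1 : 0 ≤ (if z ∈ Q then (1:ℝ) else 0) - (if h z then 1 else 0) := by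
          simp [hzQ]; split <;> norm_num
        exact mul_nonneg h1 h2
      · have hgt : (z.choose δ : ℝ) < β := by
          by_contra hle
          exact hzQ ((hQ z).mpr ⟨hzn, le_of_not_gt hle⟩)
        have h2 : c * PV n δ p z - β * PW n p z ≤ 0 := by
          rw [hkey]; nlinarith
        have h1 : (if z ∈ Q then (1:ℝ) else 0) - (if h z then 1 else 0) ≤ 0 := by
          simp [hzQ]; split <;> norm_num
        nlinarith [mul_nonneg (neg_nonneg.2 h1) (neg_nonneg.2 h2)]
    have expand : ∑ z ∈ S,
        (((if z ∈ Q then (1:ℝ) else 0) - (if h z then 1 else 0)) *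
          (c * PV n δ p z - β * PW n p z))
        = c * (∑ z ∈ S, PV n δ p z * (if z ∈ Q then 1 else 0))
          - c * (∑ z ∈ S, PV n δ p z * (if h z then 1 else 0))
          - β * (∑ z ∈ S, PW n p z * (if z ∈ Q then 1 else 0))
          + β * (∑ z ∈ S, PW n p z * (if h z then 1 else 0)) := by
      simp only [Finset.mul_sum, ← Finset.sum_sub_distrib, ← Finset.sum_add_distrib]
      apply Finset.sum_congr rfl
      intros; ring
    rw [expand] at key
    rw [hQsum_W] at hyp
    rw [hQsum_V]
    nlinarith
end

section
/- Let n be a positive integer, p ∈ (0,1), and δ a natural number with δ ≤ n. Then for every subset A of {δ, δ+1, …, n}: C(n,δ)·p^δ · ∑_{z ∈ A} C(n−δ, z−δ)·p^{z−δ}·(1−p)^{n−z} ≥ ∑_{z ∈ A} C(n,z)·p^z·(1−p)^{n−z}. -/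
open scoped BigOperators

/-- The first Claim in the proof of the paper's Theorem 5:
`C(n,δ)·p^δ · ∑_{z∈A} C(n−δ, z−δ)·p^{z−δ}·(1−p)^{n−z} ≥ ∑_{z∈A} C(n,z)·p^z·(1−p)^{n−z}`
for every subset `A` of `{δ, …, n}`. -/
theorem bernoulli_deletion_claim_one
    (n : ℕ) (hn : 0 < n) (p : ℝ) (hp0 : 0 < p) (hp1 : p < 1)
    (δ : ℕ) (hδ : δ ≤ n) (A : Finset ℕ) (hA : A ⊆ Finset.Icc δ n) :
    ∑ z ∈ A, (n.choose z : ℝ) * p ^ z * (1 - p) ^ (n - z)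
      ≤ (n.choose δ : ℝ) * p ^ δ *
        ∑ z ∈ A, ((n - δ).choose (z - δ) : ℝ) * p ^ (z - δ) * (1 - p) ^ (n - z) := by
  rw [Finset.mul_sum]
  apply Finset.sum_le_sum
  intro z hz
  obtain ⟨hδz, hzn⟩ := Finset.mem_Icc.mp (hA hz)
  have key : (n.choose z : ℝ) ≤ (n.choose δ : ℝ) * ((n - δ).choose (z - δ) : ℝ) := by
    have h := Nat.choose_mul (n := n) hδz
    calc (n.choose z : ℝ) ≤ (n.choose z * z.choose δ : ℕ) := by
          exact_mod_cast Nat.le_mul_of_pos_right _ (Nat.choose_pos hδz)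
      _ = (n.choose δ : ℝ) * ((n - δ).choose (z - δ) : ℝ) := by
          rw [h]; push_cast; ring
  have hpz : p ^ z = p ^ δ * p ^ (z - δ) := by
    rw [← pow_add, Nat.add_sub_cancel' hδz]
  rw [hpz]
  have hq : (0:ℝ) ≤ (1 - p) ^ (n - z) := pow_nonneg (by linarith) _
  nlinarith [pow_pos hp0 δ, pow_pos hp0 (z - δ), Nat.choose_pos hδz,
    mul_le_mul_of_nonneg_right key (mul_nonneg (mul_nonneg (pow_pos hp0 δ).le (pow_pos hp0 (z-δ)).le) hq)]
end

section
/- Let n be a positive integer, p ∈ (0,1), δ and z_max natural numbers with δ ≤ n. Then for every subset B of {δ, δ+1, …, n} all of whose elements are at most z_max: C(n,δ)·p^δ · ∑_{z ∈ B} C(n−δ, z−δ)·p^{z−δ}·(1−p)^{n−z} ≤ C(z_max, δ) · ∑_{z ∈ B} C(n,z)·p^z·(1−p)^{n−z}. -/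
open scoped BigOperators

/-- The second Claim in the proof of the paper's Theorem 5:
`C(n,δ)·p^δ · ∑_{z∈B} C(n−δ, z−δ)·p^{z−δ}·(1−p)^{n−z}
  ≤ C(z_max, δ) · ∑_{z∈B} C(n,z)·p^z·(1−p)^{n−z}`
for every subset `B` of `{δ, …, n}` all of whose elements are at most `z_max`. -/
theorem bernoulli_deletion_claim_two
    (n : ℕ) (hn : 0 < n) (p : ℝ) (hp0 : 0 < p) (hp1 : p < 1)
    (δ zmax : ℕ) (hδ : δ ≤ n) (B : Finset ℕ) (hB : B ⊆ Finset.Icc δ n)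
    (hBz : ∀ z ∈ B, z ≤ zmax) :
    (n.choose δ : ℝ) * p ^ δ *
        ∑ z ∈ B, ((n - δ).choose (z - δ) : ℝ) * p ^ (z - δ) * (1 - p) ^ (n - z)
      ≤ (zmax.choose δ : ℝ) *
        ∑ z ∈ B, (n.choose z : ℝ) * p ^ z * (1 - p) ^ (n - z) := by
  rw [Finset.mul_sum, Finset.mul_sum]
  apply Finset.sum_le_sum
  intro z hz
  obtain ⟨hδz, hzn⟩ := Finset.mem_Icc.mp (hB hz)
  have hzmax := hBz z hz
  have key : (n.choose δ : ℝ) * ((n - δ).choose (z - δ) : ℝ)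
      = (n.choose z : ℝ) * (z.choose δ : ℝ) := by
    rw [← Nat.cast_mul, ← Nat.cast_mul, ← Nat.choose_mul (n := n) hδz]
  have hpow : p ^ δ * p ^ (z - δ) = p ^ z := by
    rw [← pow_add, Nat.add_sub_cancel' hδz]
  have hchoose : (z.choose δ : ℝ) ≤ (zmax.choose δ : ℝ) := by
    exact_mod_cast Nat.choose_le_choose δ hzmax
  have h1p : (0:ℝ) ≤ 1 - p := by linarith
  calc (n.choose δ : ℝ) * p ^ δ * (((n - δ).choose (z - δ) : ℝ) * p ^ (z - δ) * (1 - p) ^ (n - z))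
      = (z.choose δ : ℝ) * ((n.choose z : ℝ) * p ^ z * (1 - p) ^ (n - z)) := by
        rw [← hpow]; linear_combination (p ^ δ * p ^ (z - δ) * (1 - p) ^ (n - z)) * key
    _ ≤ (zmax.choose δ : ℝ) * ((n.choose z : ℝ) * p ^ z * (1 - p) ^ (n - z)) := by
        apply mul_le_mul_of_nonneg_right hchoose
        positivity
end
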